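/- Let p ≥ 3 be prime and a ∈ ℚ_p with 0 < |a|_p < 1, such that -a is not a square in ℚ_p. Then for every nonzero x ∈ ℚ_p there exists N such that for all n ≥ N, p^{-⌊v_p(a)/2⌋} ≤ |φⁿ(x)|_p ≤ p^{⌊v_p(a)/2⌋}, where φ(z) = a·z + 1/z. -/

import Mathlib

section aux17

variable {p : ℕ} [Fact p.Prime]

/-- Key lemma: since `-a` is not a square, there is never cancellation, and
`‖a*z + 1/z‖ = max (‖a‖*‖z‖) ‖z‖⁻¹`. -/
lemma key17 (hp : 3 ≤ p) {a : ℚ_[p]} (hsq : ¬ ∃ c : ℚ_[p], c ^ 2 = -a)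
    {z : ℚ_[p]} (hz : z ≠ 0) :
    ‖a * z + 1 / z‖ = max (‖a‖ * ‖z‖) ‖z‖⁻¹ := by
  have hz' : ‖1 / z‖ = ‖z‖⁻¹ := by simp
  have haz : ‖a * z‖ = ‖a‖ * ‖z‖ := by simp
  have hzpos : (0:ℝ) < ‖z‖ := norm_pos_iff.mpr hz
  rcases ne_or_eq (‖a‖ * ‖z‖) (‖z‖⁻¹) with hne | heq
  · rw [← haz, ← hz'] at hne ⊢
    exact Padic.add_eq_max_of_ne hne
  · -- the potential cancellation case: `‖a*z^2‖ = 1`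
    have h1 : ‖a * z ^ 2‖ = 1 := by
      rw [norm_mul, norm_pow]
      calc ‖a‖ * ‖z‖ ^ 2 = (‖a‖ * ‖z‖) * ‖z‖ := by ring
        _ = ‖z‖⁻¹ * ‖z‖ := by rw [heq]
        _ = 1 := inv_mul_cancel₀ (ne_of_gt hzpos)
    have hu : ‖a * z ^ 2 + 1‖ = 1 := by
      refine le_antisymm ?_ ?_
      · calc ‖a * z ^ 2 + 1‖ ≤ max ‖a * z ^ 2‖ ‖(1:ℚ_[p])‖ :=
              Padic.nonarchimedean _ _
          _ ≤ 1 := by rw [h1, norm_one]; simp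
      · by_contra hlt
        push_neg at hlt
        -- use Hensel's lemma to produce a square root of `-a`
        have hwle : ‖-(a * z ^ 2)‖ ≤ 1 := by rw [norm_neg, h1]
        set u : ℤ_[p] := ⟨-(a * z ^ 2), hwle⟩ with hu_def
        have hcoe : ((u : ℚ_[p])) = -(a * z ^ 2) := rfl
        have h2 : ‖(2 : ℤ_[p])‖ = 1 := by
          refine le_antisymm (PadicInt.norm_le_one _) ?_
          by_contra hlt2
          push_neg at hlt2
          have h2' : ‖((2 : ℤ) : ℤ_[p])‖ < 1 := by exact_mod_cast hlt2
          have := (PadicInt.norm_int_lt_one_iff_dvd (p := p) 2).mp h2'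
          have : (p : ℤ) ≤ 2 := Int.le_of_dvd (by norm_num) this
          omega
        set F : Polynomial ℤ_[p] := Polynomial.X ^ 2 - Polynomial.C u with hF
        have heval : F.eval 1 = 1 - u := by simp [hF]
        have hderiv : (Polynomial.derivative F).eval 1 = 2 := by
          simp [hF, Polynomial.derivative_sub, Polynomial.derivative_X_pow, one_add_one_eq_two]
        have hnorm1u : ‖(1 - u : ℤ_[p])‖ < 1 := by
          rw [PadicInt.norm_def]
          push_cast [hcoe]
          have : (1 : ℚ_[p]) - -(a * z ^ 2) = a * z ^ 2 + 1 := by ring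
          rw [this]
          exact hlt
        have hnorm : ‖F.eval 1‖ < ‖(Polynomial.derivative F).eval 1‖ ^ 2 := by
          rw [heval, hderiv, h2]
          simpa using hnorm1u
        obtain ⟨c, hc0, -⟩ := hensels_lemma hnorm
        have hc2 : c ^ 2 = u := by
          have := hc0
          simp [hF, sub_eq_zero] at this
          exact this
        have hcq : ((c : ℚ_[p])) ^ 2 = -(a * z ^ 2) := by
          rw [← hcoe]
          exact_mod_cast congrArg (fun t : ℤ_[p] => (t : ℚ_[p])) hc2
        refine hsq ⟨(c : ℚ_[p]) * z⁻¹, ?_⟩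
        have hz2 : (z : ℚ_[p]) ^ 2 ≠ 0 := pow_ne_zero _ hz
        field_simp [mul_pow, hcq]
        rw [hcq]; ring
    have hrw : a * z + 1 / z = (a * z ^ 2 + 1) / z := by
      field_simp
    rw [hrw, norm_div, hu, one_div, heq, max_self]

end aux17

theorem stmt17 (p : ℕ) [Fact p.Prime] (hp : 3 ≤ p) (a : ℚ_[p])
    (ha0 : 0 < ‖a‖) (ha1 : ‖a‖ < 1)
    (hsq : ¬ ∃ c : ℚ_[p], c ^ 2 = -a)
    (x : ℚ_[p]) (hx : x ≠ 0) :
    ∃ N : ℕ, ∀ n ≥ N,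
      (p : ℝ) ^ (-(a.valuation / 2)) ≤ ‖(fun z : ℚ_[p] => a * z + 1 / z)^[n] x‖ ∧
      ‖(fun z : ℚ_[p] => a * z + 1 / z)^[n] x‖ ≤ (p : ℝ) ^ (a.valuation / 2) := by
  set φ : ℚ_[p] → ℚ_[p] := fun z => a * z + 1 / z with hφ
  have hane : a ≠ 0 := by
    intro h; rw [h, norm_zero] at ha0; exact lt_irrefl _ ha0
  set v : ℤ := a.valuation with hv
  set m : ℤ := v / 2 with hm
  have hP : (1:ℝ) < (p:ℝ) := by exact_mod_cast (Fact.out : p.Prime).one_lt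
  have hPpos : (0:ℝ) < (p:ℝ) := lt_trans one_pos hP
  have hnormA : ‖a‖ = (p:ℝ) ^ (-v) := Padic.norm_eq_zpow_neg_valuation hane
  have hv1 : 1 ≤ v := by
    by_contra h
    push_neg at h
    have h0 : (0:ℤ) ≤ -v := by omega
    have : (p:ℝ) ^ (0:ℤ) ≤ (p:ℝ) ^ (-v) :=
      (zpow_le_zpow_iff_right₀ hP).mpr h0
    rw [zpow_zero] at this
    rw [hnormA] at ha1
    linarith
  have hm0 : 0 ≤ m := by omega
  have h2m : 2 * m ≤ v ∧ v ≤ 2 * m + 1 := by omega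
  -- discreteness of the norm
  have hdisc : ∀ z : ℚ_[p], z ≠ 0 → ∀ k : ℤ, (p:ℝ) ^ k < ‖z‖ → (p:ℝ) ^ (k+1) ≤ ‖z‖ := by
    intro z hz k hk
    rw [Padic.norm_eq_zpow_neg_valuation hz] at hk ⊢
    have : k < -z.valuation := (zpow_lt_zpow_iff_right₀ hP).mp hk
    exact (zpow_le_zpow_iff_right₀ hP).mpr (by omega)
  -- the orbit never hits 0
  have hstep : ∀ z : ℚ_[p], z ≠ 0 → φ z ≠ 0 := by
    intro z hz
    have hk := key17 hp hsq hz (a := a)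
    intro h0
    rw [hφ] at h0
    simp only [] at h0
    rw [h0, norm_zero] at hk
    have : (0:ℝ) < ‖z‖⁻¹ := inv_pos.mpr (norm_pos_iff.mpr hz)
    have hmax : (0:ℝ) < max (‖a‖ * ‖z‖) ‖z‖⁻¹ := lt_of_lt_of_le this (le_max_right _ _)
    linarith [hk ▸ hmax]
  -- invariance of the annulus
  have hA : ∀ z : ℚ_[p], z ≠ 0 → (p:ℝ) ^ (-m) ≤ ‖z‖ → ‖z‖ ≤ (p:ℝ) ^ m →
      (p:ℝ) ^ (-m) ≤ ‖φ z‖ ∧ ‖φ z‖ ≤ (p:ℝ) ^ m := by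
    intro z hz hlo hhi
    have hk : ‖φ z‖ = max (‖a‖ * ‖z‖) ‖z‖⁻¹ := key17 hp hsq hz
    have hzpos : (0:ℝ) < ‖z‖ := norm_pos_iff.mpr hz
    constructor
    · rw [hk]
      refine le_trans ?_ (le_max_right _ _)
      rw [zpow_neg]
      exact (inv_le_inv₀ (by positivity) hzpos).mpr hhi
    · rw [hk, max_le_iff]
      constructor
      · have h1 : ‖a‖ * ‖z‖ ≤ (p:ℝ) ^ (-v) * (p:ℝ) ^ m := by
          rw [hnormA]
          exact mul_le_mul_of_nonneg_left hhi (by positivity)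
        refine le_trans h1 ?_
        rw [← zpow_add₀ (ne_of_gt hPpos)]
        exact (zpow_le_zpow_iff_right₀ hP).mpr (by omega)
      · calc ‖z‖⁻¹ ≤ ((p:ℝ) ^ (-m))⁻¹ := (inv_le_inv₀ hzpos (by positivity)).mpr hlo
          _ = (p:ℝ) ^ m := by rw [← zpow_neg, neg_neg]
  -- descent from the region of large norm
  have hB : ∀ z : ℚ_[p], z ≠ 0 → (p:ℝ) ^ m < ‖z‖ →
      (p:ℝ) ^ (-m) ≤ ‖φ z‖ ∧ ‖φ z‖ ≤ (p:ℝ) ^ (-1 : ℤ) * ‖z‖ := by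
    intro z hz hbig
    have hk : ‖φ z‖ = max (‖a‖ * ‖z‖) ‖z‖⁻¹ := key17 hp hsq hz
    have hzpos : (0:ℝ) < ‖z‖ := norm_pos_iff.mpr hz
    have hge : (p:ℝ) ^ (m+1) ≤ ‖z‖ := hdisc z hz m hbig
    have hinvlt : ‖z‖⁻¹ ≤ ‖a‖ * ‖z‖ := by
      have h1 : ‖z‖⁻¹ ≤ (p:ℝ) ^ (-(m+1)) := by
        rw [zpow_neg]
        exact (inv_le_inv₀ hzpos (by positivity)).mpr hge
      have h2 : (p:ℝ) ^ (-(m+1)) ≤ (p:ℝ) ^ (-v) * (p:ℝ) ^ (m+1) := by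
        rw [← zpow_add₀ (ne_of_gt hPpos)]
        exact (zpow_le_zpow_iff_right₀ hP).mpr (by omega)
      have h3 : (p:ℝ) ^ (-v) * (p:ℝ) ^ (m+1) ≤ ‖a‖ * ‖z‖ := by
        rw [hnormA]
        exact mul_le_mul_of_nonneg_left hge (by positivity)
      linarith
    have hmax : max (‖a‖ * ‖z‖) ‖z‖⁻¹ = ‖a‖ * ‖z‖ := max_eq_left hinvlt
    constructor
    · rw [hk, hmax, hnormA]
      calc (p:ℝ) ^ (-m) ≤ (p:ℝ) ^ (-v) * (p:ℝ) ^ (m+1) := by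
            rw [← zpow_add₀ (ne_of_gt hPpos)]
            exact (zpow_le_zpow_iff_right₀ hP).mpr (by omega)
        _ ≤ (p:ℝ) ^ (-v) * ‖z‖ := mul_le_mul_of_nonneg_left hge (by positivity)
    · rw [hk, hmax, hnormA]
      have : (p:ℝ) ^ (-v) ≤ (p:ℝ) ^ (-1 : ℤ) :=
        (zpow_le_zpow_iff_right₀ hP).mpr (by omega)
      exact mul_le_mul_of_nonneg_right this (le_of_lt hzpos)
  -- jump from the region of small norm
  have hC : ∀ z : ℚ_[p], z ≠ 0 → ‖z‖ < (p:ℝ) ^ (-m) → (p:ℝ) ^ (-m) ≤ ‖φ z‖ := by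
    intro z hz hsmall
    have hk : ‖φ z‖ = max (‖a‖ * ‖z‖) ‖z‖⁻¹ := key17 hp hsq hz
    have hzpos : (0:ℝ) < ‖z‖ := norm_pos_iff.mpr hz
    have hle1 : (p:ℝ) ^ (-m) ≤ 1 := by
      rw [← zpow_zero (p:ℝ)]
      exact (zpow_le_zpow_iff_right₀ hP).mpr (by omega)
    have hlt1 : ‖z‖ < 1 := lt_of_lt_of_le hsmall hle1
    have : (1:ℝ) < ‖z‖⁻¹ := (one_lt_inv₀ hzpos).mpr hlt1
    rw [hk]
    refine le_trans ?_ (le_max_right _ _)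
    linarith
  -- the descent terminates
  have hD : ∀ t : ℕ, ∀ z : ℚ_[p], z ≠ 0 → (p:ℝ) ^ (-m) ≤ ‖z‖ →
      ‖z‖ ≤ (p:ℝ) ^ (m + t) → ∃ k : ℕ,
      (p:ℝ) ^ (-m) ≤ ‖φ^[k] z‖ ∧ ‖φ^[k] z‖ ≤ (p:ℝ) ^ m := by
    intro t
    induction t with
    | zero =>
      intro z hz hlo hhi
      exact ⟨0, by simpa using hlo, by simpa using hhi⟩
    | succ t ih =>
      intro z hz hlo hhi
      by_cases hcase : ‖z‖ ≤ (p:ℝ) ^ m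
      · exact ⟨0, by simpa using hlo, by simpa using hcase⟩
      · push_neg at hcase
        obtain ⟨h1, h2⟩ := hB z hz hcase
        have hz1 : φ z ≠ 0 := hstep z hz
        have h3 : ‖φ z‖ ≤ (p:ℝ) ^ (m + t) := by
          calc ‖φ z‖ ≤ (p:ℝ) ^ (-1 : ℤ) * ‖z‖ := h2
            _ ≤ (p:ℝ) ^ (-1 : ℤ) * (p:ℝ) ^ (m + (t+1 : ℕ)) :=
              mul_le_mul_of_nonneg_left hhi (by positivity)
            _ = (p:ℝ) ^ (m + t) := by
              rw [← zpow_add₀ (ne_of_gt hPpos)]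
              congr 1
              push_cast
              ring
        obtain ⟨k, hk⟩ := ih (φ z) hz1 h1 h3
        exact ⟨k + 1, by rwa [Function.iterate_succ_apply]⟩
  -- put it together: find a starting point with norm ≥ p^(-m)
  have hstart : ∃ j : ℕ, φ^[j] x ≠ 0 ∧ (p:ℝ) ^ (-m) ≤ ‖φ^[j] x‖ := by
    by_cases hcase : (p:ℝ) ^ (-m) ≤ ‖x‖
    · exact ⟨0, by simpa using hx, by simpa using hcase⟩
    · push_neg at hcase
      refine ⟨1, hstep x hx, ?_⟩
      simpa using hC x hx hcase
  obtain ⟨j, hj0, hjlo⟩ := hstart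
  set y : ℚ_[p] := φ^[j] x with hy
  obtain ⟨t, ht⟩ := pow_unbounded_of_one_lt (‖y‖) hP
  have hyhi : ‖y‖ ≤ (p:ℝ) ^ (m + t) := by
    have h1 : ((p:ℝ) ^ (t:ℤ)) ≤ (p:ℝ) ^ (m + t) :=
      (zpow_le_zpow_iff_right₀ hP).mpr (by omega)
    have h2 : ‖y‖ ≤ (p:ℝ) ^ (t:ℤ) := by
      rw [zpow_natCast]
      exact le_of_lt ht
    linarith
  obtain ⟨k, hklo, hkhi⟩ := hD t y hj0 hjlo hyhi
  -- annulus is invariant from step j+k onward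
  refine ⟨j + k, ?_⟩
  have hiter : ∀ i : ℕ,
      (p:ℝ) ^ (-m) ≤ ‖φ^[i] (φ^[k] y)‖ ∧ ‖φ^[i] (φ^[k] y)‖ ≤ (p:ℝ) ^ m := by
    intro i
    induction i with
    | zero => exact ⟨hklo, hkhi⟩
    | succ i ih =>
      obtain ⟨ilo, ihi⟩ := ih
      have hne : φ^[i] (φ^[k] y) ≠ 0 := by
        intro h0
        rw [h0, norm_zero] at ilo
        have : (0:ℝ) < (p:ℝ) ^ (-m) := by positivity
        linarith
      have := hA _ hne ilo ihi
      rw [Function.iterate_succ_apply']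
      exact this
  intro n hn
  have hn' : n = (n - (j + k)) + k + j := by omega
  have hrw : φ^[n] x = φ^[n - (j+k)] (φ^[k] y) := by
    rw [hy, ← Function.iterate_add_apply, ← Function.iterate_add_apply, ← hn']
  have := hiter (n - (j+k))
  rw [← hrw] at this
  exact this
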